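/- Explicit supersolution for the stable nonlinearity (Step 2 of Lemma 4.2). Let a > 0, b > 0, ϑ ∈ (0,1], A > 0. Let c₄ := inf_{λ>0} ((1+λ)^{1+ϑ} − (1+λ)) / λ^{1+ϑ} and c₁ := (4 c₄^{−1} a^{−1} ϑ^{−1} (2ϑ^{−1} + 1))^{1/ϑ}. Then the function g(x) := (a/b)^{1/ϑ} (1 + c₁ A^{2/ϑ} (A² − x²)^{−2/ϑ}) satisfies (1/2) g″(x) ≤ −a g(x) + b g(x)^{1+ϑ} for all x with |x| < A. -/

import Mathlib

open MeasureTheory Set Filter Topology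

lemma ratio_lb (ϑ l : ℝ) (hϑ₀ : 0 < ϑ) (hϑ₁ : ϑ ≤ 1) (hl : 0 < l) :
    ϑ ≤ ((1 + l) ^ (1 + ϑ) - (1 + l)) / l ^ (1 + ϑ) := by
  have hT : (0:ℝ) < 1 + l := by linarith
  rw [le_div_iff₀ (Real.rpow_pos_of_pos hl _)]
  have amgm := Real.geom_mean_le_arith_mean2_weighted (by linarith : (0:ℝ) ≤ 1 - ϑ) hϑ₀.le
    zero_le_one (by positivity : (0:ℝ) ≤ (1 + l)⁻¹) (by ring)
  rw [Real.one_rpow, one_mul, Real.inv_rpow hT.le, mul_one] at amgm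
  have hTϑ : 0 < (1 + l) ^ ϑ := Real.rpow_pos_of_pos hT _
  have hlϑ : l ^ ϑ ≤ (1 + l) ^ ϑ := Real.rpow_le_rpow hl.le (by linarith) hϑ₀.le
  have hlϑ0 : 0 < l ^ ϑ := Real.rpow_pos_of_pos hl _
  have h1 : (1 + l) ≤ (1 - ϑ) * ((1 + l) * (1 + l) ^ ϑ) + ϑ * (1 + l) ^ ϑ := by
    have h := mul_le_mul_of_nonneg_left amgm (le_of_lt (mul_pos hT hTϑ))
    rw [mul_add] at h
    have e1 : (1 + l) * (1 + l) ^ ϑ * ((1 + l) ^ ϑ)⁻¹ = (1 + l) := by field_simp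
    have e2 : (1 + l) * (1 + l) ^ ϑ * (ϑ * (1 + l)⁻¹) = ϑ * (1 + l) ^ ϑ := by
      field_simp
    rw [e1, e2] at h
    linarith [h]
  have hTsum : (1 + l) ^ (1 + ϑ) = (1 + l) * (1 + l) ^ ϑ := by
    rw [Real.rpow_add hT, Real.rpow_one]
  have hlsum : l ^ (1 + ϑ) = l * l ^ ϑ := by
    rw [Real.rpow_add hl, Real.rpow_one]
  rw [hTsum, hlsum]
  nlinarith [mul_le_mul_of_nonneg_left hlϑ (mul_pos hϑ₀ hl).le]

lemma quad_step (P A x : ℝ) (hP : 0 < P) (hu : 0 ≤ A ^ 2 - x ^ 2) :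
    P * (A ^ 2 - x ^ 2) + 2 * P * (P + 1) * x ^ 2 ≤ P * (2 * P + 2) * A ^ 2 := by
  nlinarith [mul_nonneg (mul_nonneg hP.le (by linarith : (0:ℝ) ≤ 2 * P + 1)) hu]

set_option maxHeartbeats 1000000 in
/-- Explicit supersolution for the stable nonlinearity (Step 2 of Lemma 4.2): with
c₄ = inf_{λ>0} ((1+λ)^{1+ϑ} − (1+λ))/λ^{1+ϑ} and
c₁ = (4 c₄⁻¹ a⁻¹ ϑ⁻¹ (2ϑ⁻¹ + 1))^{1/ϑ}, the function
g(x) = (a/b)^{1/ϑ} (1 + c₁ A^{2/ϑ} (A² − x²)^{−2/ϑ}) satisfies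
(1/2) g″(x) ≤ −a g(x) + b g(x)^{1+ϑ} for |x| < A. -/
theorem stable_supersolution
    (a b ϑ A : ℝ) (ha : 0 < a) (hb : 0 < b) (hϑ₀ : 0 < ϑ) (hϑ₁ : ϑ ≤ 1) (hA : 0 < A)
    (c₄ : ℝ) (hc₄ : c₄ = sInf {y : ℝ | ∃ l : ℝ, 0 < l ∧
        y = ((1 + l) ^ (1 + ϑ) - (1 + l)) / l ^ (1 + ϑ)})
    (c₁ : ℝ) (hc₁ : c₁ = (4 * c₄⁻¹ * a⁻¹ * ϑ⁻¹ * (2 * ϑ⁻¹ + 1)) ^ (1 / ϑ))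
    (g : ℝ → ℝ) (hg : g = fun x : ℝ =>
      (a / b) ^ (1 / ϑ) * (1 + c₁ * A ^ (2 / ϑ) * (A ^ 2 - x ^ 2) ^ (-(2 / ϑ)))) :
    ∀ x : ℝ, |x| < A →
      (1 / 2) * deriv (deriv g) x ≤ -a * g x + b * g x ^ (1 + ϑ) := by
  intro x hx
  obtain ⟨hx1, hx2⟩ := abs_lt.mp hx
  obtain ⟨K, hK_def⟩ : ∃ K : ℝ, K = (a / b) ^ (1 / ϑ) := ⟨_, rfl⟩
  obtain ⟨C, hC_def⟩ : ∃ C : ℝ, C = c₁ * A ^ (2 / ϑ) := ⟨_, rfl⟩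
  obtain ⟨q, hq_def⟩ : ∃ q : ℝ, q = -(2 / ϑ) := ⟨_, rfl⟩
  rw [show (fun x : ℝ => (a / b) ^ (1 / ϑ) *
      (1 + c₁ * A ^ (2 / ϑ) * (A ^ 2 - x ^ 2) ^ (-(2 / ϑ)))) =
      (fun x : ℝ => K * (1 + C * (A ^ 2 - x ^ 2) ^ q)) from by
    rw [hK_def, hC_def, hq_def]] at hg
  -- c₄ bounds
  have hSne : {y : ℝ | ∃ l : ℝ, 0 < l ∧
      y = ((1 + l) ^ (1 + ϑ) - (1 + l)) / l ^ (1 + ϑ)}.Nonempty :=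
    ⟨_, 1, one_pos, rfl⟩
  have hSlb : ∀ y ∈ {y : ℝ | ∃ l : ℝ, 0 < l ∧
      y = ((1 + l) ^ (1 + ϑ) - (1 + l)) / l ^ (1 + ϑ)}, ϑ ≤ y := by
    rintro y ⟨l, hl, rfl⟩; exact ratio_lb ϑ l hϑ₀ hϑ₁ hl
  have hc₄ϑ : ϑ ≤ c₄ := hc₄ ▸ le_csInf hSne hSlb
  have hc₄pos : 0 < c₄ := lt_of_lt_of_le hϑ₀ hc₄ϑ
  have hc₄le : ∀ l : ℝ, 0 < l → c₄ ≤ ((1 + l) ^ (1 + ϑ) - (1 + l)) / l ^ (1 + ϑ) := by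
    intro l hl
    rw [hc₄]
    exact csInf_le ⟨ϑ, hSlb⟩ ⟨l, hl, rfl⟩
  -- c₁ facts
  obtain ⟨X, hX_def⟩ : ∃ X : ℝ, X = 4 * c₄⁻¹ * a⁻¹ * ϑ⁻¹ * (2 * ϑ⁻¹ + 1) := ⟨_, rfl⟩
  rw [← hX_def] at hc₁
  have hXpos : 0 < X := by
    rw [hX_def]
    have h1 : 0 < c₄⁻¹ := inv_pos.mpr hc₄pos
    have h2 : 0 < a⁻¹ := inv_pos.mpr ha
    have h3 : 0 < ϑ⁻¹ := inv_pos.mpr hϑ₀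
    positivity
  have hc₁pos : 0 < c₁ := hc₁ ▸ Real.rpow_pos_of_pos hXpos _
  have hc₁ϑ : c₁ ^ ϑ = X := by
    rw [hc₁, one_div, Real.rpow_inv_rpow hXpos.le hϑ₀.ne']
  have hKpos : 0 < K := hK_def ▸ Real.rpow_pos_of_pos (div_pos ha hb) _
  have hKϑ : K ^ ϑ = a / b := by
    rw [hK_def, one_div, Real.rpow_inv_rpow (div_pos ha hb).le hϑ₀.ne']
  have hCpos : 0 < C := hC_def ▸ mul_pos hc₁pos (Real.rpow_pos_of_pos hA _)
  have hu : 0 < A ^ 2 - x ^ 2 := by nlinarith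
  -- first derivative on Ioo (-A) A
  have hgd : ∀ y ∈ Ioo (-A) A, HasDerivAt g
      (K * (C * (-(2 * y) * q * (A ^ 2 - y ^ 2) ^ (q - 1)))) y := by
    intro y hy
    have huy : 0 < A ^ 2 - y ^ 2 := by
      obtain ⟨h1, h2⟩ := hy; nlinarith
    have h0 : HasDerivAt (fun y : ℝ => A ^ 2 - y ^ 2) (-(2 * y)) y := by
      simpa using (hasDerivAt_pow 2 y).const_sub (A ^ 2)
    have h1 : HasDerivAt (fun y : ℝ => (A ^ 2 - y ^ 2) ^ q)
        (-(2 * y) * q * (A ^ 2 - y ^ 2) ^ (q - 1)) y :=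
      h0.rpow_const (Or.inl huy.ne')
    have h2 := ((h1.const_mul C).const_add 1).const_mul K
    rw [hg]
    exact h2
  -- second derivative
  obtain ⟨G1, hG1_def⟩ : ∃ G1 : ℝ → ℝ,
      G1 = fun y => K * (C * (-(2 * y) * q * (A ^ 2 - y ^ 2) ^ (q - 1))) := ⟨_, rfl⟩
  have hmem : Ioo (-A) A ∈ 𝓝 x := Ioo_mem_nhds hx1 hx2
  have hev : deriv g =ᶠ[𝓝 x] G1 := by
    filter_upwards [hmem] with y hy
    rw [hG1_def]
    exact (hgd y hy).deriv
  have hd2 : deriv (deriv g) x = deriv G1 x := hev.deriv_eq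
  have h0x : HasDerivAt (fun y : ℝ => A ^ 2 - y ^ 2) (-(2 * x)) x := by
    simpa using (hasDerivAt_pow 2 x).const_sub (A ^ 2)
  have hw : HasDerivAt (fun y : ℝ => -(2 * y) * q) (-2 * q) x := by
    simpa using (((hasDerivAt_id x).const_mul (2:ℝ)).neg.mul_const q)
  have hv : HasDerivAt (fun y : ℝ => (A ^ 2 - y ^ 2) ^ (q - 1))
      (-(2 * x) * (q - 1) * (A ^ 2 - x ^ 2) ^ (q - 1 - 1)) x :=
    h0x.rpow_const (Or.inl hu.ne')
  have hG1' : HasDerivAt G1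
      (K * (C * (-2 * q * (A ^ 2 - x ^ 2) ^ (q - 1) +
        -(2 * x) * q * (-(2 * x) * (q - 1) * (A ^ 2 - x ^ 2) ^ (q - 1 - 1))))) x := by
    rw [hG1_def]
    exact (((hw.mul hv).const_mul C).const_mul K)
  rw [hd2, hG1'.deriv]
  -- algebraic part
  obtain ⟨E, hE_def⟩ : ∃ E : ℝ, E = (A ^ 2 - x ^ 2) ^ (q - 1 - 1) := ⟨_, rfl⟩
  have hEpos : 0 < E := hE_def ▸ Real.rpow_pos_of_pos hu _
  have hu_pow : (A ^ 2 - x ^ 2) ^ (q - 1) = (A ^ 2 - x ^ 2) * E := by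
    have h := Real.rpow_add hu 1 (q - 1 - 1)
    rw [Real.rpow_one] at h
    have e : (1 : ℝ) + (q - 1 - 1) = q - 1 := by ring
    rw [e] at h
    rw [h, hE_def]
  obtain ⟨s, hs_def⟩ : ∃ s : ℝ, s = C * (A ^ 2 - x ^ 2) ^ q := ⟨_, rfl⟩
  have hspos : 0 < s := hs_def ▸ mul_pos hCpos (Real.rpow_pos_of_pos hu _)
  have hgx : g x = K * (1 + s) := by rw [hg, hs_def]
  have hgpow : b * g x ^ (1 + ϑ) = a * K * (1 + s) ^ (1 + ϑ) := by
    rw [hgx, Real.mul_rpow hKpos.le (by positivity : (0:ℝ) ≤ 1 + s)]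
    have h1 : K ^ (1 + ϑ) = K * (a / b) := by
      rw [Real.rpow_add hKpos, Real.rpow_one, hKϑ]
    rw [h1]
    have h2 : b * (K * (a / b)) = a * K := by field_simp
    calc b * (K * (a / b) * (1 + s) ^ (1 + ϑ))
        = b * (K * (a / b)) * (1 + s) ^ (1 + ϑ) := by ring
      _ = a * K * (1 + s) ^ (1 + ϑ) := by rw [h2]
  have hkey : c₄ * s ^ (1 + ϑ) ≤ (1 + s) ^ (1 + ϑ) - (1 + s) :=
    (le_div_iff₀ (Real.rpow_pos_of_pos hspos _)).mp (hc₄le s hspos)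
  have hs_pow : s ^ (1 + ϑ) = c₁ * X * (A ^ (2 / ϑ) * A ^ 2) * E := by
    rw [hs_def, Real.mul_rpow hCpos.le (Real.rpow_pos_of_pos hu _).le,
      ← Real.rpow_mul hu.le, hC_def,
      Real.mul_rpow hc₁pos.le (Real.rpow_pos_of_pos hA _).le,
      ← Real.rpow_mul hA.le]
    have e1 : q * (1 + ϑ) = q - 1 - 1 := by
      rw [hq_def]; field_simp; ring
    have e2 : c₁ ^ (1 + ϑ) = c₁ * X := by
      rw [Real.rpow_add hc₁pos, Real.rpow_one, hc₁ϑ]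
    have e3 : A ^ (2 / ϑ * (1 + ϑ)) = A ^ (2 / ϑ) * A ^ 2 := by
      rw [show 2 / ϑ * (1 + ϑ) = 2 / ϑ + 2 from by field_simp,
        Real.rpow_add hA]
      norm_num [Real.rpow_natCast]
    rw [e1, e2, e3, hE_def]
  -- rewrite second derivative expression
  have hlhs : (1 / 2) * (K * (C * (-2 * q * (A ^ 2 - x ^ 2) ^ (q - 1) +
        -(2 * x) * q * (-(2 * x) * (q - 1) * (A ^ 2 - x ^ 2) ^ (q - 1 - 1))))) =
      K * C * E * ((2 / ϑ) * (A ^ 2 - x ^ 2) +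
        (2 * (2 / ϑ) * ((2 / ϑ) + 1)) * x ^ 2) := by
    rw [hu_pow, ← hE_def, hq_def]
    ring
  rw [hlhs]
  have hstep1 : K * C * E * ((2 / ϑ) * (A ^ 2 - x ^ 2) +
        (2 * (2 / ϑ) * ((2 / ϑ) + 1)) * x ^ 2) ≤
      K * C * E * ((2 / ϑ) * (2 * (2 / ϑ) + 2) * A ^ 2) := by
    apply mul_le_mul_of_nonneg_left _ (by positivity)
    obtain ⟨P, hP_def⟩ : ∃ P : ℝ, P = 2 / ϑ := ⟨_, rfl⟩
    have hP : 0 < P := by rw [hP_def]; positivity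
    rw [← hP_def]
    exact quad_step P A x hP hu.le
  have hacX : a * c₄ * X = (2 / ϑ) * (2 * (2 / ϑ) + 2) := by
    rw [hX_def]; field_simp; ring
  have hstep2 : K * C * E * ((2 / ϑ) * (2 * (2 / ϑ) + 2) * A ^ 2) =
      a * K * (c₄ * s ^ (1 + ϑ)) := by
    rw [hs_pow, hC_def]
    linear_combination (-(K * c₁ * A ^ (2 / ϑ) * A ^ 2 * E)) * hacX
  have hstep3 : a * K * (c₄ * s ^ (1 + ϑ)) ≤ a * K * ((1 + s) ^ (1 + ϑ) - (1 + s)) :=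
    mul_le_mul_of_nonneg_left hkey (by positivity)
  have hrhs : -a * g x + b * g x ^ (1 + ϑ) = a * K * ((1 + s) ^ (1 + ϑ) - (1 + s)) := by
    rw [hgpow, hgx]; ring
  rw [hrhs]
  calc K * C * E * ((2 / ϑ) * (A ^ 2 - x ^ 2) + (2 * (2 / ϑ) * ((2 / ϑ) + 1)) * x ^ 2)
      ≤ K * C * E * ((2 / ϑ) * (2 * (2 / ϑ) + 2) * A ^ 2) := hstep1
    _ = a * K * (c₄ * s ^ (1 + ϑ)) := hstep2
    _ ≤ a * K * ((1 + s) ^ (1 + ϑ) - (1 + s)) := hstep3
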